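/- For each α > 0, let h_CLT(α) be the unique positive h solving log(1+u) + u/(1+u) − (1/2)·log(1+2u) − u/(1+2u) = α with u = 1/h², and let h_G(α) be the unique positive h solving (1/2)·[log(1+u) − u/(1+u)²] = α with u = 1/h². Then h_G(α) < h_CLT(α) for every α > 0. -/

import Mathlib

noncomputable def Gfun (u : ℝ) : ℝ := (1/2) * (Real.log (1+u) - u/(1+u)^2)

lemma Gfun_hasDeriv (u : ℝ) (hu : 0 < u) :
    HasDerivAt Gfun ((u^2 + 3*u)/(2*(1+u)^3)) u := by
  have h1 : (1 : ℝ) + u ≠ 0 := by positivity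
  have hlog : HasDerivAt (fun x : ℝ => Real.log (1+x)) (1/(1+u)) u := by
    have := ((hasDerivAt_id u).const_add 1).log h1
    simpa using this
  have hden : HasDerivAt (fun x : ℝ => (1+x)^2) (2*(1+u)) u := by
    have := (((hasDerivAt_id u).const_add 1).fun_pow 2)
    simpa [mul_comm] using this
  have hq : HasDerivAt (fun x : ℝ => x/(1+x)^2)
      ((1*(1+u)^2 - u*(2*(1+u)))/((1+u)^2)^2) u :=
    (hasDerivAt_id u).div hden (by positivity)
  have := (hlog.sub hq).const_mul (1/2 : ℝ)
  refine HasDerivAt.congr_deriv (f := Gfun) this ?_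
  field_simp
  ring

lemma Gfun_strictMono : StrictMonoOn Gfun (Set.Ici (0:ℝ)) := by
  apply strictMonoOn_of_deriv_pos (convex_Ici 0)
  · apply ContinuousOn.mul continuousOn_const
    apply ContinuousOn.sub
    · apply ContinuousOn.log (by fun_prop)
      intro x hx
      have : (0:ℝ) ≤ x := hx
      positivity
    · apply ContinuousOn.div (by fun_prop) (by fun_prop)
      intro x hx
      have : (0:ℝ) ≤ x := hx
      positivity
  · intro x hx
    rw [interior_Ici] at hx
    have hx' : 0 < x := hx
    rw [(Gfun_hasDeriv x hx').deriv]
    positivity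

lemma log_bound (u : ℝ) (hu : 0 < u) :
    Real.log (1+2*u) - Real.log (1+u) ≤ u/(1+u) := by
  have h1 : (0:ℝ) < 1 + u := by linarith
  have h2 : (0:ℝ) < 1 + 2*u := by linarith
  have h3 : (0:ℝ) < (1+2*u)/(1+u) := by positivity
  have := Real.log_le_sub_one_of_pos h3
  rw [Real.log_div (ne_of_gt h2) (ne_of_gt h1)] at this
  have he : (1+2*u)/(1+u) - 1 = u/(1+u) := by field_simp; ring
  linarith [he ▸ this]

lemma G_lt_F (u : ℝ) (hu : 0 < u) :
    (1/2) * (Real.log (1+u) - u/(1+u)^2) <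
      Real.log (1+u) + u/(1+u) - (1/2) * Real.log (1+2*u) - u/(1+2*u) := by
  have h1 : (0:ℝ) < 1 + u := by linarith
  have h2 : (0:ℝ) < 1 + 2*u := by linarith
  have hb := log_bound u hu
  have key : u/(2*(1+u)) - u/(1+2*u) + u/(2*(1+u)^2) = u^2/(2*(1+u)^2*(1+2*u)) := by
    field_simp
    ring
  have hpos : (0:ℝ) < u^2/(2*(1+u)^2*(1+2*u)) := by positivity
  have hne : (1:ℝ) + u ≠ 0 := h1.ne'
  have e1 : u/(2*(1+u)) = (1/2)*(u/(1+u)) := by field_simp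
  have e2 : u/(2*(1+u)^2) = (1/2)*(u/(1+u)^2) := by field_simp
  linarith [hb, key, hpos, e1, e2]

theorem glass_below_clt (hCLT hG : ℝ → ℝ)
    (hCLTspec : ∀ α : ℝ, 0 < α → 0 < hCLT α ∧
      Real.log (1 + 1 / (hCLT α) ^ 2) + (1 / (hCLT α) ^ 2) / (1 + 1 / (hCLT α) ^ 2)
        - (1 / 2) * Real.log (1 + 2 * (1 / (hCLT α) ^ 2))
        - (1 / (hCLT α) ^ 2) / (1 + 2 * (1 / (hCLT α) ^ 2)) = α)
    (hGspec : ∀ α : ℝ, 0 < α → 0 < hG α ∧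
      (1 / 2) * (Real.log (1 + 1 / (hG α) ^ 2)
        - (1 / (hG α) ^ 2) / (1 + 1 / (hG α) ^ 2) ^ 2) = α) :
    ∀ α : ℝ, 0 < α → hG α < hCLT α := by
  intro α hα
  obtain ⟨hC_pos, hC_eq⟩ := hCLTspec α hα
  obtain ⟨hG_pos, hG_eq⟩ := hGspec α hα
  set a : ℝ := 1 / (hCLT α) ^ 2 with ha_def
  set b : ℝ := 1 / (hG α) ^ 2 with hb_def
  have ha : 0 < a := by positivity
  have hb : 0 < b := by positivity
  -- G a < F a = α = G b
  have hGa : Gfun a < α := by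
    rw [← hC_eq]
    have := G_lt_F a ha
    unfold Gfun
    linarith
  have hGb : Gfun b = α := by
    unfold Gfun
    rw [← hG_eq]
  have hab : a < b := by
    by_contra h
    push_neg at h
    have := Gfun_strictMono.monotoneOn (Set.mem_Ici.mpr hb.le) (Set.mem_Ici.mpr ha.le) h
    rw [hGb] at this
    linarith
  -- a < b means 1/hCLT² < 1/hG², so hG < hCLT
  rw [ha_def, hb_def, div_lt_div_iff₀ (by positivity) (by positivity)] at hab
  nlinarith [hab, hC_pos, hG_pos]
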